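/- Desnanot–Jacobi condensation for Hankel matrices: with Δ_n = det(s_{i+j-2})_{i,j=1,…,n}, Δ*_{n-1} the shifted Hankel determinant (last column shifted by one), and Δ'_{n-1} the determinant of the Hankel matrix of size n−1 with both last row and last column shifted by one (entries s_{i+j-2} except last row/column use index +1, i.e. delete row n−1 and column n−1 of the n×n Hankel matrix), the identity Δ_n Δ_{n-2} = Δ_{n-1} Δ'_{n-1} − (Δ*_{n-1})² holds. -/

import Mathlib

open Matrix Fin

namespace DJaux

variable {R : Type*} [CommRing R] {n : ℕ}

def incl (n : ℕ) : Fin n → Fin (n + 2) := fun i => ⟨i, by omega⟩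

def gmap (n : ℕ) : Fin (n + 1) → Fin (n + 2) := (⟨n, by omega⟩ : Fin (n + 2)).succAbove

noncomputable def Dmat (A : Matrix (Fin (n + 2)) (Fin (n + 2)) R) :
    Matrix (Fin (n + 2)) (Fin (n + 2)) R :=
  fun i j => if ((j : ℕ) < n) then (if i = j then 1 else 0) else A.adjugate i j

lemma det_Dmat (A : Matrix (Fin (n + 2)) (Fin (n + 2)) R) :
    (Dmat A).det =
      A.adjugate ⟨n, by omega⟩ ⟨n, by omega⟩ * A.adjugate ⟨n+1, by omega⟩ ⟨n+1, by omega⟩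
      - A.adjugate ⟨n, by omega⟩ ⟨n+1, by omega⟩ * A.adjugate ⟨n+1, by omega⟩ ⟨n, by omega⟩ := by
  rw [← det_submatrix_equiv_self (finSumFinEquiv (m := n) (n := 2))]
  have : (Dmat A).submatrix finSumFinEquiv finSumFinEquiv =
      fromBlocks 1 (Matrix.of fun i j => A.adjugate (finSumFinEquiv (Sum.inl i)) (finSumFinEquiv (Sum.inr j)))
        0 (Matrix.of fun i j => A.adjugate (finSumFinEquiv (Sum.inr i)) (finSumFinEquiv (Sum.inr j))) := by
    ext i j
    cases i <;> cases j <;>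
      simp [Dmat, fromBlocks, one_apply, Fin.ext_iff] <;> omega
  rw [this, det_fromBlocks_zero₂₁, det_one, one_mul, det_fin_two]
  have h0 : finSumFinEquiv (Sum.inr (0 : Fin 2)) = (⟨n, by omega⟩ : Fin (n+2)) := by
    simp [Fin.ext_iff]
  have h1 : finSumFinEquiv (Sum.inr (1 : Fin 2)) = (⟨n+1, by omega⟩ : Fin (n+2)) := by
    simp [Fin.ext_iff]
  rw [of_apply, of_apply, of_apply, of_apply, h0, h1]

lemma mul_Dmat_apply (A : Matrix (Fin (n + 2)) (Fin (n + 2)) R) (i j : Fin (n + 2)) :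
    (A * Dmat A) i j = if ((j : ℕ) < n) then A i j else A.det * (if i = j then 1 else 0) := by
  by_cases h : (j : ℕ) < n
  · simp only [h, if_true, Matrix.mul_apply, Dmat]
    simp [Finset.sum_ite_eq, mul_ite]
  · have : (A * Dmat A) i j = (A * A.adjugate) i j := by
      simp only [Matrix.mul_apply, Dmat, h, if_false]
    rw [this, Matrix.mul_adjugate, if_neg h]
    simp [Matrix.smul_apply, Matrix.one_apply, mul_ite]

lemma det_mul_Dmat (A : Matrix (Fin (n + 2)) (Fin (n + 2)) R) :
    (A * Dmat A).det = (A.submatrix (incl n) (incl n)).det * A.det ^ 2 := by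
  rw [← det_submatrix_equiv_self (finSumFinEquiv (m := n) (n := 2))]
  have : (A * Dmat A).submatrix finSumFinEquiv finSumFinEquiv =
      fromBlocks (A.submatrix (incl n) (incl n)) 0
        (Matrix.of fun i j => A (finSumFinEquiv (Sum.inr i)) (finSumFinEquiv (Sum.inl j)))
        (A.det • 1) := by
    ext i j
    cases i <;> cases j <;>
      simp [mul_Dmat_apply, fromBlocks, incl, one_apply, Fin.ext_iff, Matrix.submatrix,
        Matrix.smul_apply] <;> try omega
    congr 1 <;> exact Fin.ext (by simp)
  rw [this, det_fromBlocks_zero₁₂, Matrix.det_smul, det_one]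
  simp [mul_comm]

/-- The adjugate combination in `det_Dmat`, rewritten in terms of minors. -/
lemma det_Dmat_minors (A : Matrix (Fin (n + 2)) (Fin (n + 2)) R) :
    (Dmat A).det =
      (A.submatrix Fin.castSucc Fin.castSucc).det * (A.submatrix (gmap n) (gmap n)).det
      - (A.submatrix Fin.castSucc (gmap n)).det * (A.submatrix (gmap n) Fin.castSucc).det := by
  have hlast : (⟨n+1, by omega⟩ : Fin (n+2)) = Fin.last (n+1) := rfl
  have hsa : (Fin.last (n+1)).succAbove = (Fin.castSucc : Fin (n+1) → Fin (n+2)) :=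
    Fin.succAbove_last
  rw [det_Dmat]
  rw [adjugate_fin_succ_eq_det_submatrix, adjugate_fin_succ_eq_det_submatrix,
    adjugate_fin_succ_eq_det_submatrix, adjugate_fin_succ_eq_det_submatrix]
  simp only [hlast, hsa, gmap, Fin.val_last]
  have e1 : (-1 : R) ^ (n + n) = 1 := by
    rw [← two_mul, pow_mul]; norm_num
  have e2 : (-1 : R) ^ (n + 1 + (n + 1)) = 1 := by
    rw [show n + 1 + (n + 1) = 2 * (n + 1) by ring, pow_mul]; norm_num
  have e3 : (-1 : R) ^ (n + 1 + n) = -1 := by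
    rw [show n + 1 + n = 2 * n + 1 by ring, pow_succ, pow_mul]; norm_num
  have e4 : (-1 : R) ^ (n + (n + 1)) = -1 := by
    rw [show n + (n + 1) = 2 * n + 1 by ring, pow_succ, pow_mul]; norm_num
  rw [e1, e2, e3, e4]
  ring

lemma dj_of_ne {R : Type*} [CommRing R] [IsDomain R] (A : Matrix (Fin (n + 2)) (Fin (n + 2)) R)
    (hA : A.det ≠ 0) :
    A.det * (A.submatrix (incl n) (incl n)).det =
      (A.submatrix Fin.castSucc Fin.castSucc).det * (A.submatrix (gmap n) (gmap n)).det
      - (A.submatrix Fin.castSucc (gmap n)).det * (A.submatrix (gmap n) Fin.castSucc).det := by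
  have h2 := det_mul_Dmat A
  rw [det_mul, det_Dmat_minors] at h2
  have : A.det * (A.det * (A.submatrix (incl n) (incl n)).det) =
      A.det * ((A.submatrix Fin.castSucc Fin.castSucc).det * (A.submatrix (gmap n) (gmap n)).det
      - (A.submatrix Fin.castSucc (gmap n)).det * (A.submatrix (gmap n) Fin.castSucc).det) := by
    linear_combination -h2
  exact mul_left_cancel₀ hA this

/-- Desnanot–Jacobi over an arbitrary commutative ring, deleting the last two indices. -/
lemma dj (A : Matrix (Fin (n + 2)) (Fin (n + 2)) R) :
    A.det * (A.submatrix (incl n) (incl n)).det =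
      (A.submatrix Fin.castSucc Fin.castSucc).det * (A.submatrix (gmap n) (gmap n)).det
      - (A.submatrix Fin.castSucc (gmap n)).det * (A.submatrix (gmap n) Fin.castSucc).det := by
  classical
  set σ := (Fin (n + 2)) × (Fin (n + 2))
  set X : Matrix (Fin (n + 2)) (Fin (n + 2)) (MvPolynomial σ ℤ) :=
    Matrix.of fun i j => MvPolynomial.X (i, j) with hXdef
  have hX : X.det ≠ 0 := by
    intro h
    have h2 := congrArg (MvPolynomial.eval (fun p : σ => if p.1 = p.2 then (1:ℤ) else 0)) h
    rw [RingHom.map_det, RingHom.mapMatrix_apply, map_zero] at h2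
    have h3 : X.map (MvPolynomial.eval (fun p : σ => if p.1 = p.2 then (1:ℤ) else 0))
        = (1 : Matrix (Fin (n+2)) (Fin (n+2)) ℤ) := by
      ext i j
      simp [hXdef, Matrix.map_apply, Matrix.one_apply]
    rw [h3, det_one] at h2
    exact one_ne_zero h2
  have key := dj_of_ne X hX
  let φ : MvPolynomial σ ℤ →+* R :=
    (MvPolynomial.eval₂Hom (Int.castRingHom R) (fun p : σ => A p.1 p.2))
  have hmap : ∀ (k : ℕ) (u : Fin k → Fin (n+2)) (v : Fin k → Fin (n+2)),
      φ ((X.submatrix u v).det) = (A.submatrix u v).det := by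
    intro k u v
    rw [RingHom.map_det]
    congr 1
    ext i j
    simp [hXdef, Matrix.map_apply, φ]
  have hdet : φ X.det = A.det := by
    have := hmap (n+2) id id
    simpa using this
  have := congrArg φ key
  rw [_root_.map_mul, _root_.map_sub, _root_.map_mul, _root_.map_mul, hdet, hmap, hmap, hmap, hmap, hmap] at this
  exact this

end DJaux


/-- The `n × n` Hankel determinant `Δₙ = det (s_{i+j})_{0 ≤ i,j ≤ n-1}`. -/
noncomputable def hankelDet {K : Type*} [CommRing K] (s : ℕ → K) (n : ℕ) : K :=
  (Matrix.of fun i j : Fin n => s ((i : ℕ) + (j : ℕ))).det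

/-- Desnanot–Jacobi (Dodgson condensation) for the Hankel matrix of size `n = m + 2`:
`Δₙ Δ_{n-2} = Δ_{n-1} Δ'_{n-1} − (Δ*_{n-1})²`, where `Δ*_{n-1}` is the minor of the
`n × n` Hankel matrix deleting the last row and the second-to-last column, and
`Δ'_{n-1}` is the minor deleting the second-to-last row and column. -/
theorem hankel_dodgson {K : Type*} [CommRing K] (s : ℕ → K) (m : ℕ) :
    hankelDet s (m + 2) * hankelDet s m =
      hankelDet s (m + 1) *
        (Matrix.of fun i j : Fin (m + 1) =>
          s ((if (i : ℕ) < m then (i : ℕ) else (i : ℕ) + 1) +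
             (if (j : ℕ) < m then (j : ℕ) else (j : ℕ) + 1))).det
      - ((Matrix.of fun i j : Fin (m + 1) =>
          s ((i : ℕ) + (if (j : ℕ) < m then (j : ℕ) else (j : ℕ) + 1))).det) ^ 2 := by
  set A : Matrix (Fin (m + 2)) (Fin (m + 2)) K :=
    Matrix.of (fun i j : Fin (m + 2) => s ((i : ℕ) + (j : ℕ))) with hA
  have hg : ∀ i : Fin (m + 1), ((DJaux.gmap m i : Fin (m+2)) : ℕ)
      = if (i : ℕ) < m then (i : ℕ) else (i : ℕ) + 1 := by
    intro i
    by_cases h : (i : ℕ) < m <;>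
      simp [DJaux.gmap, Fin.succAbove, Fin.lt_def, h]
  have key := DJaux.dj A
  have h0 : hankelDet s (m + 2) = A.det := rfl
  have h1 : hankelDet s m = (A.submatrix (DJaux.incl m) (DJaux.incl m)).det := by
    unfold hankelDet
    congr 1
    all_goals ext i j
    all_goals simp [hA, DJaux.incl]
  have h2 : hankelDet s (m + 1) = (A.submatrix Fin.castSucc Fin.castSucc).det := by
    unfold hankelDet
    congr 1
    all_goals ext i j
    all_goals simp [hA]
  have h3 : (Matrix.of fun i j : Fin (m + 1) =>
        s ((if (i : ℕ) < m then (i : ℕ) else (i : ℕ) + 1) +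
           (if (j : ℕ) < m then (j : ℕ) else (j : ℕ) + 1))).det
      = (A.submatrix (DJaux.gmap m) (DJaux.gmap m)).det := by
    congr 1
    all_goals ext i j
    all_goals simp [hA, hg]
  have h4 : (Matrix.of fun i j : Fin (m + 1) =>
        s ((i : ℕ) + (if (j : ℕ) < m then (j : ℕ) else (j : ℕ) + 1))).det
      = (A.submatrix Fin.castSucc (DJaux.gmap m)).det := by
    congr 1
    all_goals ext i j
    all_goals simp [hA, hg]
  have h5 : (A.submatrix (DJaux.gmap m) Fin.castSucc).det
      = (A.submatrix Fin.castSucc (DJaux.gmap m)).det := by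
    rw [← Matrix.det_transpose]
    congr 1
    all_goals ext i j
    all_goals simp [hA, Matrix.transpose_apply, add_comm]
  rw [h0, h1, h2, h3, h4, key, h5]
  ring
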